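/- Let 𝔮 and 𝔞 be nonzero ideals of 𝒪_o and, for t > 0, set lct^{𝔮^t}(𝔞) := sup{c ≥ 0 : |𝔮|^{2t} e^{−2c log|𝔞|} is integrable near o} and Tn(t; 𝔞, 𝔮) := lct^{𝔮^t}(𝔞). If lct^𝔮(𝔞) = Tn(1; 𝔞, 𝔮) < +∞, then the function t ↦ Tn(t; 𝔞, 𝔮) is non-decreasing and concave on (0, +∞); moreover, for any 0 < s < t, lct^{𝔮^s}(𝔞) < +∞ if and only if lct^{𝔮^t}(𝔞) < +∞. -/

import Mathlib

open Filter MeasureTheory Set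
open scoped ENNReal NNReal Topology
noncomputable section

/-- ℂⁿ. -/
abbrev En (n : ℕ) := Fin n → ℂ

/-- The ring `𝒪_o` of germs at the origin of holomorphic functions on `ℂⁿ`,
realized as a subring of the ring of germs at `0` of `ℂ`-valued functions. -/
def Oring (n : ℕ) : Subring (Filter.Germ (𝓝 (0 : En n)) ℂ) where
  carrier := {g | ∃ f : En n → ℂ, AnalyticAt ℂ f 0 ∧ (f : Filter.Germ (𝓝 (0 : En n)) ℂ) = g}
  zero_mem' := ⟨0, analyticAt_const, rfl⟩
  one_mem' := ⟨1, analyticAt_const, rfl⟩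
  add_mem' := by rintro a b ⟨f, hf, rfl⟩ ⟨g, hg, rfl⟩; exact ⟨f + g, hf.add hg, rfl⟩
  mul_mem' := by rintro a b ⟨f, hf, rfl⟩ ⟨g, hg, rfl⟩; exact ⟨f * g, hf.mul hg, rfl⟩
  neg_mem' := by rintro a ⟨f, hf, rfl⟩; exact ⟨-f, hf.neg, rfl⟩

/-- `𝒪_o`. -/
abbrev O (n : ℕ) := ↥(Oring n)

lemma mem_Oring {n : ℕ} {g : Filter.Germ (𝓝 (0 : En n)) ℂ} :
    g ∈ Oring n ↔ ∃ f : En n → ℂ, AnalyticAt ℂ f 0 ∧ (f : Filter.Germ (𝓝 (0 : En n)) ℂ) = g :=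
  Iff.rfl

/-- A choice of a holomorphic representative of a germ. -/
def rep {n : ℕ} (f : O n) : En n → ℂ := Classical.choose (mem_Oring.mp f.2)

lemma rep_analyticAt {n : ℕ} (f : O n) : AnalyticAt ℂ (rep f) 0 :=
  (Classical.choose_spec (mem_Oring.mp f.2)).1

lemma rep_germ {n : ℕ} (f : O n) :
    ((rep f : En n → ℂ) : Filter.Germ (𝓝 (0 : En n)) ℂ) = f.1 :=
  (Classical.choose_spec (mem_Oring.mp f.2)).2

/-- The germ of a function holomorphic near `0`, as an element of `𝒪_o`. -/
def toO {n : ℕ} (f : En n → ℂ) (hf : AnalyticAt ℂ f 0) : O n :=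
  ⟨(f : Filter.Germ (𝓝 (0 : En n)) ℂ), ⟨f, hf, rfl⟩⟩

/-- The constant `c`, as an element of `𝒪_o`. -/
def constO (n : ℕ) (c : ℂ) : O n := toO (fun _ => c) analyticAt_const

/-- `e^x` for an extended real `x`, with values in `[0,∞]`. -/
def eexp (x : EReal) : ℝ≥0∞ :=
  if x = ⊥ then 0 else if x = ⊤ then ⊤ else ENNReal.ofReal (Real.exp x.toReal)

/-- `log x` for `x ∈ [0,∞]`, with values in `[-∞,∞]`. -/
def elog (x : ℝ≥0∞) : EReal :=
  if x = 0 then ⊥ else if x = ⊤ then ⊤ else ((Real.log x.toReal : ℝ) : EReal)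

/-- A `[0,∞]`-valued function is (Lebesgue-)integrable near the origin. -/
def IntNearZero {n : ℕ} (F : En n → ℝ≥0∞) : Prop :=
  ∃ V ∈ 𝓝 (0 : En n), ∫⁻ z in V, F z < ⊤

/-- `log ‖f‖` for a germ `f ∈ 𝒪_o`, via the chosen representative. -/
def logAbsGerm {n : ℕ} (f : O n) (z : En n) : EReal := elog ((‖rep f z‖₊ : ℝ≥0∞))

/-- `|f|²` for a germ `f ∈ 𝒪_o`. -/
def absSqGerm {n : ℕ} (f : O n) (z : En n) : ℝ≥0∞ := (‖rep f z‖₊ : ℝ≥0∞) ^ 2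

open scoped Classical in
/-- A choice of a finite family of generators of an ideal of `𝒪_o` (when one exists). -/
def idealGens {n : ℕ} (a : Ideal (O n)) : Σ k : ℕ, Fin k → O n :=
  if h : ∃ p : Σ k : ℕ, Fin k → O n, Ideal.span (Set.range p.2) = a then h.choose
  else ⟨0, fun _ => 0⟩

/-- `|𝔞|² = Σ_j |g_j|²` for an ideal `𝔞` of `𝒪_o` with generators `g_j`. -/
def absSqIdeal {n : ℕ} (a : Ideal (O n)) (z : En n) : ℝ≥0∞ :=
  ∑ j : Fin (idealGens a).1, (‖rep ((idealGens a).2 j) z‖₊ : ℝ≥0∞) ^ 2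

/-- `log |𝔞| = ½ log Σ_j |g_j|²` for an ideal `𝔞` of `𝒪_o`. -/
def logAbsIdeal {n : ℕ} (a : Ideal (O n)) (z : En n) : EReal :=
  elog ((absSqIdeal a z) ^ ((1 : ℝ) / 2))

/-- Sub-mean value inequality on circles in complex lines (tested against continuous
majorants of the circle restriction). -/
def SubMeanOnLines {n : ℕ} (φ : En n → EReal) (U : Set (En n)) : Prop :=
  ∀ z ∈ U, ∀ w : En n, ∀ r : ℝ, 0 < r →
    (∀ c : ℂ, ‖c‖ ≤ r → z + c • w ∈ U) →
    ∀ g : ℝ → ℝ, Continuous g →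
      (∀ t : ℝ, φ (z + ((r : ℂ) * Complex.exp (t * Complex.I)) • w) ≤ (g t : EReal)) →
      φ z ≤ (((1 / (2 * Real.pi)) * ∫ t in (0:ℝ)..(2 * Real.pi), g t : ℝ) : EReal)

/-- Plurisubharmonicity on a set `U ⊆ ℂⁿ`: upper semicontinuous, `< +∞`, not identically
`-∞`, and satisfying the sub-mean value inequality on circles in complex lines. -/
def PshOn {n : ℕ} (φ : En n → EReal) (U : Set (En n)) : Prop :=
  UpperSemicontinuousOn φ U ∧ (∀ z ∈ U, φ z ≠ ⊤) ∧ (¬ ∀ z ∈ U, φ z = ⊥) ∧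
    SubMeanOnLines φ U

/-- Plurisubharmonic near the origin. -/
def PshNearZero {n : ℕ} (φ : En n → EReal) : Prop := ∃ U ∈ 𝓝 (0 : En n), PshOn φ U

/-- A valuation on `𝒪_o`: a non-constant map `ν : 𝒪_o∖{0} → [0,∞)` (with `ν 0 = ∞`)
satisfying `ν(fg) = ν f + ν g`, `ν(f+g) ≥ min (ν f) (ν g)`, and `ν c = 0` for
nonzero constants `c`. -/
structure GermValuation (n : ℕ) where
  v : O n → ℝ≥0∞
  v_zero : v 0 = ⊤
  v_ne_top : ∀ f : O n, f ≠ 0 → v f ≠ ⊤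
  v_mul : ∀ f g : O n, v (f * g) = v f + v g
  v_add : ∀ f g : O n, min (v f) (v g) ≤ v (f + g)
  v_const : ∀ c : ℂ, c ≠ 0 → v (constO n c) = 0
  v_nonconst : ∃ f : O n, f ≠ 0 ∧ v f ≠ 0

/-- `ν(𝔠) = inf {ν f : f ∈ 𝔠}` for an ideal `𝔠` of `𝒪_o`. -/
def idealVal {n : ℕ} (ν : GermValuation n) (I : Ideal (O n)) : ℝ≥0∞ :=
  ⨅ f ∈ (I : Set (O n)), ν.v f

/-- The graded sequence of ideals `a^ν_m = {f : ν f ≥ m}` attached to a valuation `ν`. -/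
def aSeq {n : ℕ} (ν : GermValuation n) (m : ℕ+) : Ideal (O n) where
  carrier := {f : O n | ((m : ℕ) : ℝ≥0∞) ≤ ν.v f}
  zero_mem' := by simp [ν.v_zero]
  add_mem' := by
    intro f g hf hg
    exact le_trans (le_min hf hg) (ν.v_add f g)
  smul_mem' := by
    intro c f hf
    have : ν.v (c * f) = ν.v c + ν.v f := ν.v_mul c f
    have hf' : ((m : ℕ) : ℝ≥0∞) ≤ ν.v f := hf
    calc ((m : ℕ) : ℝ≥0∞) ≤ ν.v f := hf'
    _ ≤ ν.v c + ν.v f := le_add_self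
    _ = ν.v (c * f) := (ν.v_mul c f).symm

/-- A graded sequence of ideals: `a_p · a_q ⊆ a_{p+q}`. -/
def GradedSeq {n : ℕ} (a : ℕ+ → Ideal (O n)) : Prop :=
  ∀ p q : ℕ+, a p * a q ≤ a (p + q)

/-- A subadditive sequence of ideals: nonzero ideals with `b_{s+t} ⊆ b_s · b_t`. -/
def SubaddSeq {n : ℕ} (b : ℝ → Ideal (O n)) : Prop :=
  (∀ t : ℝ, 0 < t → b t ≠ ⊥) ∧
    ∀ s t : ℝ, 0 < s → 0 < t → b (s + t) ≤ b s * b t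

/-- The jumping number `c_o^𝔮(ψ) = sup {c ≥ 0 : |𝔮|² e^{-2cψ} integrable near o}`. -/
def jumpIdeal {n : ℕ} (q : Ideal (O n)) (ψ : En n → EReal) : ℝ≥0∞ :=
  sSup {c : ℝ≥0∞ | ∃ r : ℝ, 0 ≤ r ∧ c = ENNReal.ofReal r ∧
    IntNearZero (fun z => absSqIdeal q z * eexp ((((-2) * r : ℝ) : EReal) * ψ z))}

/-- The jumping number `c_o^f(ψ) = sup {c ≥ 0 : |f|² e^{-2cψ} integrable near o}`. -/
def jumpGerm {n : ℕ} (f : O n) (ψ : En n → EReal) : ℝ≥0∞ :=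
  sSup {c : ℝ≥0∞ | ∃ r : ℝ, 0 ≤ r ∧ c = ENNReal.ofReal r ∧
    IntNearZero (fun z => absSqGerm f z * eexp ((((-2) * r : ℝ) : EReal) * ψ z))}

/-- `lct^𝔮(𝔞) = c_o^𝔮(log|𝔞|)`. -/
def lctIdeal {n : ℕ} (q a : Ideal (O n)) : ℝ≥0∞ := jumpIdeal q (logAbsIdeal a)

/-- `lct^𝔮(a_•) = sup_m m · lct^𝔮(a_m)`. -/
def lctGrade {n : ℕ} (q : Ideal (O n)) (a : ℕ+ → Ideal (O n)) : ℝ≥0∞ :=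
  ⨆ m : ℕ+, ((m : ℕ) : ℝ≥0∞) * lctIdeal q (a m)

/-- `ν(a_•) = inf_m ν(a_m)/m`. -/
def gradVal {n : ℕ} (ν : GermValuation n) (a : ℕ+ → Ideal (O n)) : ℝ≥0∞ :=
  ⨅ m : ℕ+, idealVal ν (a m) / ((m : ℕ) : ℝ≥0∞)

/-- `ν(b_•) = sup_{t>0} ν(b_t)/t` for a subadditive sequence. -/
def subVal {n : ℕ} (ν : GermValuation n) (b : ℝ → Ideal (O n)) : ℝ≥0∞ :=
  ⨆ t : {t : ℝ // 0 < t}, idealVal ν (b t.1) / ENNReal.ofReal t.1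

/-- `lct^𝔮(b_•) = inf_{t>0} t · lct^𝔮(b_t)` for a subadditive sequence. -/
def lctSub {n : ℕ} (q : Ideal (O n)) (b : ℝ → Ideal (O n)) : ℝ≥0∞ :=
  ⨅ t : {t : ℝ // 0 < t}, ENNReal.ofReal t.1 * lctIdeal q (b t.1)

/-- `𝒜(ν)`: the supremum of `ν(a_•)·lct^𝔮(a_•) − ν(𝔮)` over all nonzero ideals `𝔮` and
graded sequences `a_•` with `lct^𝔮(a_•) < ∞`. -/
def scriptA {n : ℕ} (ν : GermValuation n) : ℝ≥0∞ :=
  sSup {x : ℝ≥0∞ | ∃ (q : Ideal (O n)) (a : ℕ+ → Ideal (O n)), q ≠ ⊥ ∧ GradedSeq a ∧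
    lctGrade q a < ⊤ ∧ x = gradVal ν a * lctGrade q a - idealVal ν q}

/-- The relative type `σ(u,Φ) = sup {c ≥ 0 : u ≤ cΦ + O(1) near o}`. -/
def relType {n : ℕ} (u Φ : En n → EReal) : ℝ≥0∞ :=
  sSup {c : ℝ≥0∞ | ∃ r : ℝ, 0 ≤ r ∧ c = ENNReal.ofReal r ∧
    ∃ C : ℝ, ∀ᶠ z in 𝓝 (0 : En n), u z ≤ (r : EReal) * Φ z + (C : EReal)}

/-- A local Zhou weight related to `|𝔮₀|²` near the origin. -/
def LocalZhouWeight {n : ℕ} (q0 : Ideal (O n)) (Φ : En n → EReal) : Prop :=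
  PshNearZero Φ ∧
  (∃ N0 : ℕ, IntNearZero (fun z =>
      absSqIdeal q0 z * (‖z‖₊ : ℝ≥0∞) ^ (2 * N0) * eexp ((((-2 : ℝ)) : EReal) * Φ z))) ∧
  (¬ IntNearZero (fun z => absSqIdeal q0 z * eexp ((((-2 : ℝ)) : EReal) * Φ z))) ∧
  (∀ φ' : En n → EReal, PshNearZero φ' →
    (∃ C : ℝ, ∀ᶠ z in 𝓝 (0 : En n), Φ z ≤ φ' z + (C : EReal)) →
    (¬ IntNearZero (fun z => absSqIdeal q0 z * eexp ((((-2 : ℝ)) : EReal) * φ' z))) →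
    ∃ C : ℝ, ∀ᶠ z in 𝓝 (0 : En n), φ' z ≤ Φ z + (C : EReal) ∧ Φ z ≤ φ' z + (C : EReal))

/-- A Zhou valuation related to `|𝔮₀|²`: a valuation given by the relative type to some
local Zhou weight related to `|𝔮₀|²`. -/
def IsZhouValuation {n : ℕ} (q0 : Ideal (O n)) (ν : GermValuation n) : Prop :=
  ∃ Φ : En n → EReal, LocalZhouWeight q0 Φ ∧
    ∀ f : O n, f ≠ 0 → ν.v f = relType (logAbsGerm f) Φ

/-- A Zhou valuation (related to some nonzero ideal). -/
def IsZhou {n : ℕ} (ν : GermValuation n) : Prop :=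
  ∃ q0 : Ideal (O n), q0 ≠ ⊥ ∧ IsZhouValuation q0 ν

lemma rep_add_eventuallyEq {n : ℕ} (f g : O n) :
    rep (f + g) =ᶠ[𝓝 (0 : En n)] fun z => rep f z + rep g z := by
  have h : ((rep (f + g) : En n → ℂ) : Filter.Germ (𝓝 (0 : En n)) ℂ)
      = ((fun z => rep f z + rep g z : En n → ℂ) : Filter.Germ (𝓝 (0 : En n)) ℂ) := by
    rw [rep_germ]
    have h1 : ((f + g : O n) : Filter.Germ (𝓝 (0 : En n)) ℂ) = (f : _) + (g : _) := rfl
    rw [h1, ← rep_germ f, ← rep_germ g]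
    rfl
  exact Filter.Germ.coe_eq.mp h

lemma rep_mul_eventuallyEq {n : ℕ} (f g : O n) :
    rep (f * g) =ᶠ[𝓝 (0 : En n)] fun z => rep f z * rep g z := by
  have h : ((rep (f * g) : En n → ℂ) : Filter.Germ (𝓝 (0 : En n)) ℂ)
      = ((fun z => rep f z * rep g z : En n → ℂ) : Filter.Germ (𝓝 (0 : En n)) ℂ) := by
    rw [rep_germ]
    have h1 : ((f * g : O n) : Filter.Germ (𝓝 (0 : En n)) ℂ) = (f : _) * (g : _) := rfl
    rw [h1, ← rep_germ f, ← rep_germ g]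
    rfl
  exact Filter.Germ.coe_eq.mp h

lemma rep_zero_eventuallyEq {n : ℕ} :
    rep (0 : O n) =ᶠ[𝓝 (0 : En n)] fun _ => (0 : ℂ) := by
  have h : ((rep (0 : O n) : En n → ℂ) : Filter.Germ (𝓝 (0 : En n)) ℂ)
      = ((fun _ => (0:ℂ) : En n → ℂ) : Filter.Germ (𝓝 (0 : En n)) ℂ) := by
    rw [rep_germ]; rfl
  exact Filter.Germ.coe_eq.mp h

/-- The maximal ideal of `𝒪_o`: germs vanishing at the origin. -/
def mIdeal (n : ℕ) : Ideal (O n) where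
  carrier := {f : O n | rep f 0 = 0}
  zero_mem' := by
    have := (rep_zero_eventuallyEq (n := n)).eq_of_nhds
    simpa using this
  add_mem' := by
    intro f g hf hg
    have h := (rep_add_eventuallyEq f g).eq_of_nhds
    simp only [Set.mem_setOf_eq] at hf hg ⊢
    rw [h, hf, hg, add_zero]
  smul_mem' := by
    intro c f hf
    have h := (rep_mul_eventuallyEq c f).eq_of_nhds
    simp only [Set.mem_setOf_eq] at hf ⊢
    show rep (c * f) 0 = 0
    rw [h, hf, mul_zero]

/-- A centered valuation: `ν(𝔪) > 0` for the maximal ideal `𝔪` of `𝒪_o`. -/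
def Centered {n : ℕ} (ν : GermValuation n) : Prop := 0 < idealVal ν (mIdeal n)

lemma exists_contOn_rep {n : ℕ} (f : O n) :
    ∃ U : Set (En n), IsOpen U ∧ (0 : En n) ∈ U ∧ ContinuousOn (rep f) U := by
  have h := (rep_analyticAt f).eventually_analyticAt
  obtain ⟨U, hUS, hUopen, h0⟩ := mem_nhds_iff.mp h
  exact ⟨U, hUopen, h0, fun z hz => ((hUS hz).continuousAt).continuousWithinAt⟩

lemma sq_add_le_four {x y : ℝ≥0∞} (h : y ≤ x) : (x + y) ^ 2 ≤ 4 * x ^ 2 := by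
  have h1 : x + y ≤ 2 * x := by rw [two_mul]; exact add_le_add le_rfl h
  calc (x + y) ^ 2 ≤ (2 * x) ^ 2 := pow_le_pow_left₀ zero_le h1 2
  _ = 4 * x ^ 2 := by ring

lemma lint_part_le {n : ℕ} {S V : Set (En n)} (hSV : S ⊆ V) (G H : En n → ℝ≥0∞)
    (hae : ∀ᵐ z ∂((volume : Measure (En n)).restrict S), G z ≤ 4 * H z) :
    ∫⁻ z in S, G z ≤ 4 * ∫⁻ z in V, H z := by
  calc ∫⁻ z in S, G z ≤ ∫⁻ z in S, 4 * H z := lintegral_mono_ae hae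
    _ = 4 * ∫⁻ z in S, H z := lintegral_const_mul' _ _ (by norm_num)
    _ ≤ 4 * ∫⁻ z in V, H z := by gcongr

lemma contOn_ennnorm {n : ℕ} {f : En n → ℂ} {U : Set (En n)} (hf : ContinuousOn f U) :
    ContinuousOn (fun z => (‖f z‖₊ : ℝ≥0∞)) U :=
  ENNReal.continuous_coe.comp_continuousOn hf.nnnorm

/-- The multiplier ideal `𝓘(ψ)_o = {f ∈ 𝒪_o : |f|² e^{-2ψ} integrable near o}`. -/
def multIdeal {n : ℕ} (ψ : En n → EReal) : Ideal (O n) where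
  carrier := {f : O n |
    IntNearZero (fun z => absSqGerm f z * eexp ((((-2 : ℝ)) : EReal) * ψ z))}
  zero_mem' := by
    have hmem : {z : En n | rep (0 : O n) z = 0} ∈ 𝓝 (0 : En n) := rep_zero_eventuallyEq
    obtain ⟨U, hUS, hUopen, h0⟩ := mem_nhds_iff.mp hmem
    refine ⟨U, hUopen.mem_nhds h0, ?_⟩
    have hz : ∫⁻ z in U, (absSqGerm (0 : O n) z * eexp ((((-2 : ℝ)) : EReal) * ψ z))
        = ∫⁻ _ in U, (0 : ℝ≥0∞) := by
      refine setLIntegral_congr_fun hUopen.measurableSet (fun z hzU => ?_)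
      have : rep (0 : O n) z = 0 := hUS hzU
      simp [absSqGerm, this]
    rw [hz]
    simp
  add_mem' := by
    rintro f g ⟨Vf, hVf, hIf⟩ ⟨Vg, hVg, hIg⟩
    set W : En n → ℝ≥0∞ := fun z => eexp ((((-2 : ℝ)) : EReal) * ψ z) with hW
    obtain ⟨Uf, hUfo, hUf0, hUfc⟩ := exists_contOn_rep f
    obtain ⟨Ug, hUgo, hUg0, hUgc⟩ := exists_contOn_rep g
    have hSeq : {z : En n | rep (f + g) z = rep f z + rep g z} ∈ 𝓝 (0 : En n) :=
      rep_add_eventuallyEq f g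
    obtain ⟨U, hUS, hUopen, h0U⟩ := mem_nhds_iff.mp
      (Filter.inter_mem (Filter.inter_mem (Filter.inter_mem hVf hVg) hSeq)
        (Filter.inter_mem (hUfo.mem_nhds hUf0) (hUgo.mem_nhds hUg0)))
    have hUVf : U ⊆ Vf := fun z hz => (hUS hz).1.1.1
    have hUVg : U ⊆ Vg := fun z hz => (hUS hz).1.1.2
    have hUeq : ∀ z ∈ U, rep (f + g) z = rep f z + rep g z := fun z hz => (hUS hz).1.2
    have hGf : AEMeasurable (fun z => (‖rep f z‖₊ : ℝ≥0∞)) (volume.restrict U) :=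
      (contOn_ennnorm (hUfc.mono (fun z hz => (hUS hz).2.1))).aemeasurable
        hUopen.measurableSet
    have hGg : AEMeasurable (fun z => (‖rep g z‖₊ : ℝ≥0∞)) (volume.restrict U) :=
      (contOn_ennnorm (hUgc.mono (fun z hz => (hUS hz).2.2))).aemeasurable
        hUopen.measurableSet
    set A : Set (En n) := {z | hGg.mk _ z ≤ hGf.mk _ z} with hA
    have hAm : MeasurableSet A := measurableSet_le hGg.measurable_mk hGf.measurable_mk
    refine ⟨U, hUopen.mem_nhds h0U, ?_⟩
    have hsplit : ∫⁻ z in U, (absSqGerm (f + g) z * W z)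
        ≤ (∫⁻ z in U ∩ A, (absSqGerm (f + g) z * W z))
          + ∫⁻ z in U ∩ Aᶜ, (absSqGerm (f + g) z * W z) := by
      have hU : U = (U ∩ A) ∪ (U ∩ Aᶜ) := by
        rw [← Set.inter_union_distrib_left, Set.union_compl_self, Set.inter_univ]
      calc ∫⁻ z in U, (absSqGerm (f + g) z * W z)
          = ∫⁻ z in (U ∩ A) ∪ (U ∩ Aᶜ), (absSqGerm (f + g) z * W z) := by rw [← hU]
        _ ≤ _ := lintegral_union_le _ _ _
    have haef : ∀ᵐ z ∂((volume : Measure (En n)).restrict (U ∩ A)),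
        absSqGerm (f + g) z * W z ≤ 4 * (absSqGerm f z * W z) := by
      have hmem := ae_restrict_mem (μ := (volume : Measure (En n))) ((hUopen.measurableSet).inter hAm)
      have hmkf : (fun z => (‖rep f z‖₊ : ℝ≥0∞)) =ᵐ[(volume : Measure (En n)).restrict (U ∩ A)]
          hGf.mk _ :=
        (hGf.ae_eq_mk).filter_mono (ae_mono (Measure.restrict_mono Set.inter_subset_left le_rfl))
      have hmkg : (fun z => (‖rep g z‖₊ : ℝ≥0∞)) =ᵐ[(volume : Measure (En n)).restrict (U ∩ A)]
          hGg.mk _ :=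
        (hGg.ae_eq_mk).filter_mono (ae_mono (Measure.restrict_mono Set.inter_subset_left le_rfl))
      filter_upwards [hmem, hmkf, hmkg] with z hz hf' hg'
      have hle : (‖rep g z‖₊ : ℝ≥0∞) ≤ (‖rep f z‖₊ : ℝ≥0∞) := by
        rw [hf', hg']; exact hz.2
      have hnormle : absSqGerm (f + g) z ≤ 4 * absSqGerm f z := by
        have h2 : (‖rep (f + g) z‖₊ : ℝ≥0∞)
            ≤ (‖rep f z‖₊ : ℝ≥0∞) + (‖rep g z‖₊ : ℝ≥0∞) := by
          rw [hUeq z hz.1]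
          exact_mod_cast nnnorm_add_le _ _
        calc absSqGerm (f + g) z
            ≤ ((‖rep f z‖₊ : ℝ≥0∞) + (‖rep g z‖₊ : ℝ≥0∞)) ^ 2 := pow_le_pow_left₀ zero_le h2 2
          _ ≤ 4 * (‖rep f z‖₊ : ℝ≥0∞) ^ 2 := sq_add_le_four hle
          _ = 4 * absSqGerm f z := rfl
      calc absSqGerm (f + g) z * W z ≤ (4 * absSqGerm f z) * W z :=
            mul_le_mul_of_nonneg_right hnormle zero_le
        _ = 4 * (absSqGerm f z * W z) := by ring
    have haeg : ∀ᵐ z ∂((volume : Measure (En n)).restrict (U ∩ Aᶜ)),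
        absSqGerm (f + g) z * W z ≤ 4 * (absSqGerm g z * W z) := by
      have hmem := ae_restrict_mem (μ := (volume : Measure (En n))) ((hUopen.measurableSet).inter hAm.compl)
      have hmkf : (fun z => (‖rep f z‖₊ : ℝ≥0∞)) =ᵐ[(volume : Measure (En n)).restrict (U ∩ Aᶜ)]
          hGf.mk _ :=
        (hGf.ae_eq_mk).filter_mono (ae_mono (Measure.restrict_mono Set.inter_subset_left le_rfl))
      have hmkg : (fun z => (‖rep g z‖₊ : ℝ≥0∞)) =ᵐ[(volume : Measure (En n)).restrict (U ∩ Aᶜ)]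
          hGg.mk _ :=
        (hGg.ae_eq_mk).filter_mono (ae_mono (Measure.restrict_mono Set.inter_subset_left le_rfl))
      filter_upwards [hmem, hmkf, hmkg] with z hz hf' hg'
      have hle : (‖rep f z‖₊ : ℝ≥0∞) ≤ (‖rep g z‖₊ : ℝ≥0∞) := by
        rw [hf', hg']
        exact le_of_not_ge hz.2
      have hnormle : absSqGerm (f + g) z ≤ 4 * absSqGerm g z := by
        have h2 : (‖rep (f + g) z‖₊ : ℝ≥0∞)
            ≤ (‖rep g z‖₊ : ℝ≥0∞) + (‖rep f z‖₊ : ℝ≥0∞) := by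
          rw [hUeq z hz.1, add_comm (rep f z)]
          exact_mod_cast nnnorm_add_le _ _
        calc absSqGerm (f + g) z
            ≤ ((‖rep g z‖₊ : ℝ≥0∞) + (‖rep f z‖₊ : ℝ≥0∞)) ^ 2 := pow_le_pow_left₀ zero_le h2 2
          _ ≤ 4 * (‖rep g z‖₊ : ℝ≥0∞) ^ 2 := sq_add_le_four hle
          _ = 4 * absSqGerm g z := rfl
      calc absSqGerm (f + g) z * W z ≤ (4 * absSqGerm g z) * W z :=
            mul_le_mul_of_nonneg_right hnormle zero_le
        _ = 4 * (absSqGerm g z * W z) := by ring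
    have h1 := lint_part_le (S := U ∩ A) (V := Vf)
      (fun z hz => hUVf hz.1) _ _ haef
    have h2 := lint_part_le (S := U ∩ Aᶜ) (V := Vg)
      (fun z hz => hUVg hz.1) _ _ haeg
    calc ∫⁻ z in U, (absSqGerm (f + g) z * W z)
        ≤ (∫⁻ z in U ∩ A, (absSqGerm (f + g) z * W z))
          + ∫⁻ z in U ∩ Aᶜ, (absSqGerm (f + g) z * W z) := hsplit
      _ ≤ 4 * (∫⁻ z in Vf, (absSqGerm f z * W z))
          + 4 * ∫⁻ z in Vg, (absSqGerm g z * W z) := add_le_add h1 h2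
      _ < ⊤ := by
          exact ENNReal.add_lt_top.mpr
            ⟨ENNReal.mul_lt_top (by norm_num) hIf, ENNReal.mul_lt_top (by norm_num) hIg⟩
  smul_mem' := by
    rintro c f ⟨Vf, hVf, hIf⟩
    set W : En n → ℝ≥0∞ := fun z => eexp ((((-2 : ℝ)) : EReal) * ψ z) with hW
    have hSeq : {z : En n | rep (c * f) z = rep c z * rep f z} ∈ 𝓝 (0 : En n) :=
      rep_mul_eventuallyEq c f
    have hcont : ContinuousAt (rep c) 0 := (rep_analyticAt c).continuousAt
    set M : ℝ≥0 := ‖rep c 0‖₊ + 1 with hM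
    have hbd : {z : En n | ‖rep c z‖₊ ≤ M} ∈ 𝓝 (0 : En n) := by
      have : ∀ᶠ z in 𝓝 (0 : En n), dist (rep c z) (rep c 0) < 1 :=
        hcont.eventually (Metric.ball_mem_nhds _ one_pos)
      filter_upwards [this] with z hz
      have : ‖rep c z‖ ≤ ‖rep c 0‖ + 1 := by
        have h1 : ‖rep c z - rep c 0‖ < 1 := by
          rwa [dist_eq_norm] at hz
        calc ‖rep c z‖ = ‖rep c 0 + (rep c z - rep c 0)‖ := by ring_nf
          _ ≤ ‖rep c 0‖ + ‖rep c z - rep c 0‖ := norm_add_le _ _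
          _ ≤ ‖rep c 0‖ + 1 := by linarith
      simpa [hM, ← NNReal.coe_le_coe] using this
    obtain ⟨U, hUS, hUopen, h0U⟩ := mem_nhds_iff.mp
      (Filter.inter_mem (Filter.inter_mem hVf hSeq) hbd)
    refine ⟨U, hUopen.mem_nhds h0U, ?_⟩
    have hae : ∀ᵐ z ∂((volume : Measure (En n)).restrict U),
        absSqGerm (c • f) z * W z ≤ ((M : ℝ≥0∞) ^ 2) * (absSqGerm f z * W z) := by
      refine (ae_restrict_mem (μ := (volume : Measure (En n))) hUopen.measurableSet).mono fun z hz => ?_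
      have heq : rep (c * f) z = rep c z * rep f z := (hUS hz).1.2
      have hble : (‖rep c z‖₊ : ℝ≥0∞) ≤ (M : ℝ≥0∞) := by
        exact_mod_cast (hUS hz).2
      have : absSqGerm (c • f) z ≤ (M : ℝ≥0∞) ^ 2 * absSqGerm f z := by
        show (‖rep (c * f) z‖₊ : ℝ≥0∞) ^ 2 ≤ _
        rw [heq]
        have : (‖rep c z * rep f z‖₊ : ℝ≥0∞) = (‖rep c z‖₊ : ℝ≥0∞) * (‖rep f z‖₊ : ℝ≥0∞) := by
          rw [nnnorm_mul]; exact_mod_cast rfl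
        rw [this, mul_pow]
        exact mul_le_mul_of_nonneg_right (pow_le_pow_left₀ zero_le hble 2) zero_le
      calc absSqGerm (c • f) z * W z ≤ ((M : ℝ≥0∞) ^ 2 * absSqGerm f z) * W z :=
            mul_le_mul_of_nonneg_right this zero_le
        _ = (M : ℝ≥0∞) ^ 2 * (absSqGerm f z * W z) := by ring
    calc ∫⁻ z in U, (absSqGerm (c • f) z * W z)
        ≤ ∫⁻ z in U, ((M : ℝ≥0∞) ^ 2) * (absSqGerm f z * W z) := lintegral_mono_ae hae
      _ = ((M : ℝ≥0∞) ^ 2) * ∫⁻ z in U, (absSqGerm f z * W z) :=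
          lintegral_const_mul' _ _ (by simp)
      _ ≤ ((M : ℝ≥0∞) ^ 2) * ∫⁻ z in Vf, (absSqGerm f z * W z) := by
          gcongr
          exact fun z hz => (hUS hz).1.1
      _ < ⊤ := ENNReal.mul_lt_top (by simp [ENNReal.pow_lt_top, ENNReal.coe_lt_top]) hIf

/-- The sequence of multiplier ideals `b^φ_t = 𝓘(tφ)_o`. -/
def bphi {n : ℕ} (φ : En n → EReal) (t : ℝ) : Ideal (O n) :=
  multIdeal (fun z => (t : EReal) * φ z)

/-- The Tian function `Tn(t) = sup {c ≥ 0 : |𝔮₀|^{2t} e^{-2cΦ} integrable near o}`. -/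
def TnFun {n : ℕ} (q0 : Ideal (O n)) (Φ : En n → EReal) (t : ℝ) : ℝ≥0∞ :=
  sSup {c : ℝ≥0∞ | ∃ r : ℝ, 0 ≤ r ∧ c = ENNReal.ofReal r ∧
    IntNearZero (fun z => (absSqIdeal q0 z) ^ t * eexp ((((-2) * r : ℝ) : EReal) * Φ z))}

/-- `lct^{𝔮^t}(𝔞) = sup {c ≥ 0 : |𝔮|^{2t} e^{-2c log|𝔞|} integrable near o}`. -/
def lctQt {n : ℕ} (q a : Ideal (O n)) (t : ℝ) : ℝ≥0∞ :=
  sSup {c : ℝ≥0∞ | ∃ r : ℝ, 0 ≤ r ∧ c = ENNReal.ofReal r ∧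
    IntNearZero (fun z => (absSqIdeal q z) ^ t * eexp ((((-2) * r : ℝ) : EReal) * logAbsIdeal a z))}

/-- `lct^{𝔮^t}(a_•) = sup_m m · lct^{𝔮^t}(a_m)` for a graded sequence `a_•`. -/
def lctQtGrade {n : ℕ} (q : Ideal (O n)) (a : ℕ+ → Ideal (O n)) (t : ℝ) : ℝ≥0∞ :=
  ⨆ m : ℕ+, ((m : ℕ) : ℝ≥0∞) * lctQt q (a m) t

/-- The Euclidean unit ball in `ℂⁿ`. -/
def eball (n : ℕ) : Set (En n) := {z | ∑ i, Complex.normSq (z i) < 1}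

lemma zero_mem_eball (n : ℕ) : (0 : En n) ∈ eball n := by simp [eball]

/-! ### Auxiliary lemmas for Statement 18 -/

section Statement18Aux

lemma eexp_bot' : eexp ⊥ = 0 := by simp [eexp]

lemma eexp_top' : eexp ⊤ = ⊤ := by simp [eexp]

lemma eexp_coe' (x : ℝ) : eexp (x : EReal) = ENNReal.ofReal (Real.exp x) := by
  simp [eexp]

lemma eexp_coe_mul_elog (c : ℝ) (y : ℝ≥0∞) : eexp ((c : EReal) * elog y) = y ^ c := by
  rcases eq_or_ne y 0 with rfl | hy0
  · rw [show elog 0 = ⊥ from if_pos rfl]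
    rcases lt_trichotomy c 0 with hc | rfl | hc
    · rw [EReal.coe_mul_bot_of_neg hc, eexp_top', ENNReal.zero_rpow_of_neg hc]
    · rw [EReal.coe_zero, zero_mul, show ((0 : EReal)) = ((0 : ℝ) : EReal) from rfl,
        eexp_coe', ENNReal.rpow_zero]
      simp [Real.exp_zero]
    · rw [EReal.coe_mul_bot_of_pos hc, eexp_bot', ENNReal.zero_rpow_of_pos hc]
  rcases eq_or_ne y ⊤ with rfl | hyt
  · rw [show elog ⊤ = ⊤ by simp [elog]]
    rcases lt_trichotomy c 0 with hc | rfl | hc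
    · rw [EReal.coe_mul_top_of_neg hc, eexp_bot', ENNReal.top_rpow_of_neg hc]
    · rw [EReal.coe_zero, zero_mul, show ((0 : EReal)) = ((0 : ℝ) : EReal) from rfl,
        eexp_coe', ENNReal.rpow_zero]
      simp [Real.exp_zero]
    · rw [EReal.coe_mul_top_of_pos hc, eexp_top', ENNReal.top_rpow_of_pos hc]
  · have hpos : 0 < y.toReal := ENNReal.toReal_pos hy0 hyt
    rw [show elog y = ((Real.log y.toReal : ℝ) : EReal) by simp [elog, hy0, hyt],
      ← EReal.coe_mul, eexp_coe']
    rw [mul_comm c (Real.log y.toReal), ← Real.rpow_def_of_pos hpos, ← ENNReal.ofReal_rpow_of_pos hpos,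
      ENNReal.ofReal_toReal hyt]

lemma lctQt_eq {n : ℕ} (q a : Ideal (O n)) (t : ℝ) :
    lctQt q a t = sSup {c : ℝ≥0∞ | ∃ r : ℝ, 0 ≤ r ∧ c = ENNReal.ofReal r ∧
      IntNearZero (fun z => (absSqIdeal q z) ^ t * (absSqIdeal a z) ^ (-r))} := by
  have key : ∀ r : ℝ,
      (fun z => (absSqIdeal q z) ^ t *
        eexp ((((-2) * r : ℝ) : EReal) * logAbsIdeal a z))
      = (fun z => (absSqIdeal q z) ^ t * (absSqIdeal a z) ^ (-r)) := by
    intro r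
    funext z
    rw [logAbsIdeal, eexp_coe_mul_elog, ← ENNReal.rpow_mul,
      show (1 : ℝ) / 2 * ((-2) * r) = -r by ring]
  unfold lctQt
  congr 1
  ext c
  constructor
  · rintro ⟨r, h1, h2, h3⟩
    exact ⟨r, h1, h2, by rwa [key r] at h3⟩
  · rintro ⟨r, h1, h2, h3⟩
    exact ⟨r, h1, h2, by rw [key r]; exact h3⟩

lemma absSqIdeal_ne_top {n : ℕ} (a : Ideal (O n)) (z : En n) : absSqIdeal a z ≠ ⊤ := by
  unfold absSqIdeal
  exact (ENNReal.sum_lt_top.2 fun j _ => by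
    exact ENNReal.pow_lt_top ENNReal.coe_lt_top).ne

lemma intNearZero_one {n : ℕ} : IntNearZero (fun _ : En n => (1 : ℝ≥0∞)) := by
  obtain ⟨s, hs, hfin⟩ := (volume : Measure (En n)).finiteAt_nhds (0 : En n)
  exact ⟨s, hs, by rwa [setLIntegral_one]⟩

lemma intNearZero_mono {n : ℕ} {F G : En n → ℝ≥0∞} (h : ∀ z, F z ≤ G z)
    (hG : IntNearZero G) : IntNearZero F := by
  obtain ⟨V, hV, hi⟩ := hG
  exact ⟨V, hV, lt_of_le_of_lt (lintegral_mono h) hi⟩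

lemma intNearZero_add {n : ℕ} {G H : En n → ℝ≥0∞} {U : Set (En n)} (hU : IsOpen U)
    (h0 : (0 : En n) ∈ U) (hGm : AEMeasurable G ((volume : Measure (En n)).restrict U))
    (hG : IntNearZero G) (hH : IntNearZero H) : IntNearZero (fun z => G z + H z) := by
  obtain ⟨V, hV, hGi⟩ := hG
  obtain ⟨W, hW, hHi⟩ := hH
  obtain ⟨O, hOsub, hOopen, hO0⟩ := mem_nhds_iff.mp (Filter.inter_mem hV hW)
  refine ⟨U ∩ O, (hU.inter hOopen).mem_nhds ⟨h0, hO0⟩, ?_⟩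
  have hGm' : AEMeasurable G ((volume : Measure (En n)).restrict (U ∩ O)) :=
    hGm.mono_measure (Measure.restrict_mono Set.inter_subset_left le_rfl)
  rw [lintegral_add_left' hGm']
  have h1 : ∫⁻ z in U ∩ O, G z ≤ ∫⁻ z in V, G z :=
    lintegral_mono_set (fun z hz => (hOsub hz.2).1)
  have h2 : ∫⁻ z in U ∩ O, H z ≤ ∫⁻ z in W, H z :=
    lintegral_mono_set (fun z hz => (hOsub hz.2).2)
  exact lt_of_le_of_lt (add_le_add h1 h2) (ENNReal.add_lt_top.2 ⟨hGi, hHi⟩)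

lemma intNearZero_of_le_mul {n : ℕ} {F G : En n → ℝ≥0∞} {C : ℝ≥0∞} (hC : C ≠ ⊤)
    {U : Set (En n)} (hU : IsOpen U) (h0 : (0 : En n) ∈ U)
    (hle : ∀ z ∈ U, F z ≤ C * G z) (hG : IntNearZero G) : IntNearZero F := by
  obtain ⟨V, hV, hi⟩ := hG
  refine ⟨U ∩ V, Filter.inter_mem (hU.mem_nhds h0) hV, ?_⟩
  have hae : ∀ᵐ z ∂((volume : Measure (En n)).restrict (U ∩ V)), F z ≤ C * G z := by
    have hmem : ∀ᵐ z ∂((volume : Measure (En n)).restrict (U ∩ V)), z ∈ U :=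
      (ae_restrict_mem hU.measurableSet).filter_mono
        (ae_mono (Measure.restrict_mono Set.inter_subset_left le_rfl))
    filter_upwards [hmem] with z hz using hle z hz
  calc ∫⁻ z in U ∩ V, F z ≤ ∫⁻ z in U ∩ V, C * G z := lintegral_mono_ae hae
    _ = C * ∫⁻ z in U ∩ V, G z := lintegral_const_mul' _ _ hC
    _ ≤ C * ∫⁻ z in V, G z := by gcongr; exact Set.inter_subset_right
    _ < ⊤ := ENNReal.mul_lt_top hC.lt_top hi

lemma ennreal_rpow_add_of_nonpos {x : ℝ≥0∞} {a b : ℝ} (ha : a ≤ 0) (hb : b ≤ 0) :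
    x ^ (a + b) = x ^ a * x ^ b := by
  rcases eq_or_ne x 0 with rfl | hx0
  · rcases eq_or_lt_of_le ha with rfl | ha'
    · simp
    · rcases eq_or_lt_of_le hb with rfl | hb'
      · simp
      · rw [ENNReal.zero_rpow_of_neg (by linarith), ENNReal.zero_rpow_of_neg ha',
          ENNReal.zero_rpow_of_neg hb', ENNReal.top_mul_top]
  rcases eq_or_ne x ⊤ with rfl | hxt
  · rcases eq_or_lt_of_le ha with rfl | ha'
    · simp
    · rcases eq_or_lt_of_le hb with rfl | hb'
      · simp
      · rw [ENNReal.top_rpow_of_neg (by linarith), ENNReal.top_rpow_of_neg ha',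
          ENNReal.top_rpow_of_neg hb', mul_zero]
  · exact ENNReal.rpow_add _ _ hx0 hxt

lemma ennreal_rpow_interp_le_add (x y : ℝ≥0∞) {l : ℝ} (h0 : 0 ≤ l) (h1 : l ≤ 1) :
    x ^ l * y ^ (1 - l) ≤ x + y := by
  rcases le_total x y with h | h
  · calc x ^ l * y ^ (1 - l) ≤ y ^ l * y ^ (1 - l) :=
        mul_le_mul_left (ENNReal.rpow_le_rpow h h0) _
      _ = y ^ (l + (1 - l)) := (ENNReal.rpow_add_of_nonneg _ _ h0 (by linarith)).symm
      _ = y := by rw [show l + (1 - l) = 1 by ring, ENNReal.rpow_one]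
      _ ≤ x + y := le_add_self
  · calc x ^ l * y ^ (1 - l) ≤ x ^ l * x ^ (1 - l) :=
        mul_le_mul_right (ENNReal.rpow_le_rpow h (by linarith)) _
      _ = x ^ (l + (1 - l)) := (ENNReal.rpow_add_of_nonneg _ _ h0 (by linarith)).symm
      _ = x := by rw [show l + (1 - l) = 1 by ring, ENNReal.rpow_one]
      _ ≤ x + y := le_self_add

lemma ennreal_rpow_le_one_add (x : ℝ≥0∞) {l : ℝ} (h0 : 0 ≤ l) (h1 : l ≤ 1) :
    x ^ l ≤ 1 + x := by
  rcases le_total x 1 with h | h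
  · exact le_trans (ENNReal.rpow_le_one h h0) le_self_add
  · calc x ^ l ≤ x ^ (1 : ℝ) := ENNReal.rpow_le_rpow_of_exponent_le h h1
      _ = x := ENNReal.rpow_one x
      _ ≤ 1 + x := le_add_self

/-- Near the origin, `|𝔮|²` is bounded by a finite constant `M ≥ 1`. -/
lemma absSqIdeal_bounded {n : ℕ} (q : Ideal (O n)) :
    ∃ U : Set (En n), IsOpen U ∧ (0 : En n) ∈ U ∧ ∃ M : ℝ≥0∞, 1 ≤ M ∧ M ≠ ⊤ ∧
      ∀ z ∈ U, absSqIdeal q z ≤ M := by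
  set k := (idealGens q).1
  set g := (idealGens q).2
  have hev : ∀ᶠ z in 𝓝 (0 : En n), ∀ j : Fin k,
      (‖rep (g j) z‖₊ : ℝ≥0∞) ≤ (‖rep (g j) 0‖₊ : ℝ≥0∞) + 1 := by
    rw [Filter.eventually_all]
    intro j
    have hc : ContinuousAt (fun z => ‖rep (g j) z‖) 0 :=
      (rep_analyticAt (g j)).continuousAt.norm
    have : ∀ᶠ z in 𝓝 (0 : En n), ‖rep (g j) z‖ < ‖rep (g j) 0‖ + 1 :=
      hc.eventually_lt continuousAt_const (lt_add_one _)
    filter_upwards [this] with z hz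
    have hnn : ‖rep (g j) z‖₊ ≤ ‖rep (g j) 0‖₊ + 1 := by
      rw [← NNReal.coe_le_coe]
      push_cast
      exact hz.le
    calc (‖rep (g j) z‖₊ : ℝ≥0∞) ≤ ((‖rep (g j) 0‖₊ + 1 : ℝ≥0) : ℝ≥0∞) :=
        ENNReal.coe_le_coe.2 hnn
      _ = (‖rep (g j) 0‖₊ : ℝ≥0∞) + 1 := by push_cast; ring
  obtain ⟨U, hUsub, hUopen, hU0⟩ := mem_nhds_iff.mp hev
  refine ⟨U, hUopen, hU0, (∑ j : Fin k, ((‖rep (g j) 0‖₊ : ℝ≥0∞) + 1) ^ 2) + 1,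
    le_add_self, ?_, ?_⟩
  · refine ENNReal.add_ne_top.2 ⟨(ENNReal.sum_lt_top.2 fun j _ => ?_).ne, ENNReal.one_ne_top⟩
    exact ENNReal.pow_lt_top (ENNReal.add_lt_top.2 ⟨ENNReal.coe_lt_top, ENNReal.one_lt_top⟩)
  · intro z hz
    have hb := hUsub hz
    refine le_trans ?_ le_self_add
    unfold absSqIdeal
    exact Finset.sum_le_sum fun j _ => pow_le_pow_left₀ zero_le (hb j) 2

/-- Near the origin, `|𝔞|²` is a continuous function (with the chosen representatives). -/
lemma absSqIdeal_contOn {n : ℕ} (a : Ideal (O n)) :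
    ∃ U : Set (En n), IsOpen U ∧ (0 : En n) ∈ U ∧
      ContinuousOn (fun z => absSqIdeal a z) U := by
  set k := (idealGens a).1
  set g := (idealGens a).2
  choose U hUo hU0 hUc using fun j : Fin k => exists_contOn_rep (g j)
  refine ⟨⋂ j, U j, isOpen_iInter_of_finite hUo, Set.mem_iInter.2 hU0, ?_⟩
  unfold absSqIdeal
  apply continuousOn_finset_sum
  intro j _
  exact (ENNReal.continuous_pow 2).comp_continuousOn
    (contOn_ennnorm ((hUc j).mono (Set.iInter_subset U j)))

end Statement18Aux

/-- For nonzero ideals `𝔮, 𝔞` of `𝒪_o` with `lct^𝔮(𝔞) < ∞`, the function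
`t ↦ Tn(t;𝔞,𝔮) = lct^{𝔮^t}(𝔞)` is non-decreasing and concave on `(0,∞)`, and for any
`0 < s < t`, `lct^{𝔮^s}(𝔞) < ∞ ↔ lct^{𝔮^t}(𝔞) < ∞`. -/
theorem lctQt_monotone_concave
    (n : ℕ) (q a : Ideal (O n)) (hq : q ≠ ⊥) (ha : a ≠ ⊥)
    (hfin : lctQt q a 1 < ⊤) :
    (∀ s t : ℝ, 0 < s → 0 < t → s ≤ t → lctQt q a s ≤ lctQt q a t) ∧
    (∀ s t l : ℝ, 0 < s → 0 < t → 0 ≤ l → l ≤ 1 →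
      ENNReal.ofReal l * lctQt q a s + ENNReal.ofReal (1 - l) * lctQt q a t
        ≤ lctQt q a (l * s + (1 - l) * t)) ∧
    (∀ s t : ℝ, 0 < s → s < t → (lctQt q a s < ⊤ ↔ lctQt q a t < ⊤)) := by
  classical
  obtain ⟨Ub, hUbo, hUb0, M, hM1, hMt, hQle⟩ := absSqIdeal_bounded q
  set S : ℝ → Set ℝ≥0∞ := fun t => {c : ℝ≥0∞ | ∃ r : ℝ, 0 ≤ r ∧ c = ENNReal.ofReal r ∧
      IntNearZero (fun z => (absSqIdeal q z) ^ t * (absSqIdeal a z) ^ (-r))} with hSdef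
  have hlct : ∀ t : ℝ, lctQt q a t = sSup (S t) := by
    intro t
    simp only [hSdef]
    exact lctQt_eq q a t
  -- `0` belongs to each defining set
  have hmem0 : ∀ t : ℝ, 0 ≤ t → (0 : ℝ≥0∞) ∈ S t := by
    intro t ht
    refine ⟨0, le_refl 0, by simp, ?_⟩
    have hbd : ∀ z ∈ Ub,
        (absSqIdeal q z) ^ t * (absSqIdeal a z) ^ (-(0 : ℝ)) ≤ (M ^ t) * 1 := by
      intro z hz
      rw [neg_zero, ENNReal.rpow_zero, mul_one, mul_one]
      exact ENNReal.rpow_le_rpow (hQle z hz) ht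
    exact intNearZero_of_le_mul (ENNReal.rpow_ne_top_of_nonneg ht hMt) hUbo hUb0 hbd
      intNearZero_one
  -- monotonicity
  have hmono : ∀ s t : ℝ, 0 ≤ s → s ≤ t → lctQt q a s ≤ lctQt q a t := by
    intro s t hs hst
    rw [hlct, hlct]
    apply sSup_le_sSup
    rintro c ⟨r, hr, rfl, hint⟩
    refine ⟨r, hr, rfl, ?_⟩
    refine intNearZero_of_le_mul (C := M ^ (t - s))
      (ENNReal.rpow_ne_top_of_nonneg (sub_nonneg.2 hst) hMt) hUbo hUb0 ?_ hint
    intro z hz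
    have h1 : (absSqIdeal q z) ^ t = (absSqIdeal q z) ^ (t - s) * (absSqIdeal q z) ^ s := by
      rw [← ENNReal.rpow_add_of_nonneg _ _ (sub_nonneg.2 hst) hs, sub_add_cancel]
    rw [h1]
    calc (absSqIdeal q z) ^ (t - s) * (absSqIdeal q z) ^ s * (absSqIdeal a z) ^ (-r)
        ≤ M ^ (t - s) * (absSqIdeal q z) ^ s * (absSqIdeal a z) ^ (-r) := by
          exact mul_le_mul_left (mul_le_mul_left
            (ENNReal.rpow_le_rpow (hQle z hz) (sub_nonneg.2 hst)) _) _
      _ = M ^ (t - s) * ((absSqIdeal q z) ^ s * (absSqIdeal a z) ^ (-r)) := by ring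
  -- scaling down: if `lct` is infinite at `t`, it is infinite at any `0 < s < t`
  have hscale : ∀ s t : ℝ, 0 < s → s < t → lctQt q a t = ⊤ → lctQt q a s = ⊤ := by
    intro s t hs hst htop
    have ht0 : 0 < t := lt_trans hs hst
    rw [hlct] at htop ⊢
    rw [sSup_eq_top] at htop ⊢
    intro b hb
    obtain ⟨c, hcS, hc⟩ := htop (ENNReal.ofReal (b.toReal * (t / s))) ENNReal.ofReal_lt_top
    obtain ⟨r, hr, rfl, hint⟩ := hcS
    have hrb : b.toReal * (t / s) < r := by
      by_contra hcon
      push_neg at hcon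
      exact absurd (ENNReal.ofReal_le_ofReal hcon) (not_le.2 hc)
    have hbt : 0 ≤ b.toReal := ENNReal.toReal_nonneg
    have hr' : b.toReal < r * (s / t) := by
      have h2 := mul_lt_mul_of_pos_right hrb (div_pos hs ht0)
      have h3 : b.toReal * (t / s) * (s / t) = b.toReal := by field_simp
      rw [h3] at h2
      exact h2
    refine ⟨ENNReal.ofReal (r * (s / t)), ⟨r * (s / t),
      mul_nonneg hr (by positivity), rfl, ?_⟩, ?_⟩
    · have heq : ∀ z : En n, (absSqIdeal q z) ^ s * (absSqIdeal a z) ^ (-(r * (s / t)))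
          = ((absSqIdeal q z) ^ t * (absSqIdeal a z) ^ (-r)) ^ (s / t) := by
        intro z
        rw [ENNReal.mul_rpow_of_nonneg _ _ (by positivity : (0:ℝ) ≤ s / t),
          ← ENNReal.rpow_mul, ← ENNReal.rpow_mul,
          show t * (s / t) = s by field_simp, show -r * (s / t) = -(r * (s / t)) by ring]
      refine intNearZero_mono (fun z => ?_)
        (intNearZero_add isOpen_univ trivial aemeasurable_const intNearZero_one hint)
      rw [heq z]
      exact ennreal_rpow_le_one_add _ (by positivity)
        (by rw [div_le_one ht0]; exact hst.le)
    · calc b = ENNReal.ofReal b.toReal := (ENNReal.ofReal_toReal hb.ne).symm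
        _ < ENNReal.ofReal (r * (s / t)) := by
            rw [ENNReal.ofReal_lt_ofReal_iff (lt_of_le_of_lt hbt hr')]
            exact hr'
  -- concavity
  have hconc : ∀ s t l : ℝ, 0 < s → 0 < t → 0 ≤ l → l ≤ 1 →
      ENNReal.ofReal l * lctQt q a s + ENNReal.ofReal (1 - l) * lctQt q a t
        ≤ lctQt q a (l * s + (1 - l) * t) := by
    intro s t l hs ht hl0 hl1
    have hl1' : (0 : ℝ) ≤ 1 - l := by linarith
    obtain ⟨Uc, hUco, hUc0, hQc⟩ := absSqIdeal_contOn q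
    obtain ⟨Ua, hUao, hUa0, hAc⟩ := absSqIdeal_contOn a
    have hU0o : IsOpen (Uc ∩ Ua) := hUco.inter hUao
    have hU00 : (0 : En n) ∈ Uc ∩ Ua := ⟨hUc0, hUa0⟩
    rw [hlct s, hlct t, hlct (l * s + (1 - l) * t)]
    haveI h1 : Nonempty ↥(S s) := ⟨⟨0, hmem0 s hs.le⟩⟩
    haveI h2 : Nonempty ↥(S t) := ⟨⟨0, hmem0 t ht.le⟩⟩
    rw [sSup_eq_iSup' (S s), sSup_eq_iSup' (S t), ENNReal.mul_iSup, ENNReal.mul_iSup]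
    refine ENNReal.iSup_add_iSup_le ?_
    rintro ⟨c1, hc1⟩ ⟨c2, hc2⟩
    obtain ⟨r1, hr1, rfl, hint1⟩ := hc1
    obtain ⟨r2, hr2, rfl, hint2⟩ := hc2
    apply le_sSup
    have hcoe : ENNReal.ofReal l * ENNReal.ofReal r1
        + ENNReal.ofReal (1 - l) * ENNReal.ofReal r2
        = ENNReal.ofReal (l * r1 + (1 - l) * r2) := by
      rw [← ENNReal.ofReal_mul hl0, ← ENNReal.ofReal_mul hl1',
        ← ENNReal.ofReal_add (mul_nonneg hl0 hr1) (mul_nonneg hl1' hr2)]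
    show ENNReal.ofReal l * ENNReal.ofReal r1
        + ENNReal.ofReal (1 - l) * ENNReal.ofReal r2 ∈ S (l * s + (1 - l) * t)
    rw [hcoe]
    refine ⟨l * r1 + (1 - l) * r2,
      add_nonneg (mul_nonneg hl0 hr1) (mul_nonneg hl1' hr2), rfl, ?_⟩
    have hkey : ∀ z : En n,
        (absSqIdeal q z) ^ (l * s + (1 - l) * t)
          * (absSqIdeal a z) ^ (-(l * r1 + (1 - l) * r2))
        = ((absSqIdeal q z) ^ s * (absSqIdeal a z) ^ (-r1)) ^ l
          * ((absSqIdeal q z) ^ t * (absSqIdeal a z) ^ (-r2)) ^ (1 - l) := by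
      intro z
      rw [ENNReal.mul_rpow_of_nonneg _ _ hl0, ENNReal.mul_rpow_of_nonneg _ _ hl1',
        ← ENNReal.rpow_mul, ← ENNReal.rpow_mul, ← ENNReal.rpow_mul, ← ENNReal.rpow_mul,
        show l * s + (1 - l) * t = s * l + t * (1 - l) by ring,
        ENNReal.rpow_add_of_nonneg _ _ (mul_nonneg hs.le hl0) (mul_nonneg ht.le hl1'),
        show -(l * r1 + (1 - l) * r2) = (-r1) * l + (-r2) * (1 - l) by ring,
        ennreal_rpow_add_of_nonpos
          (by nlinarith [mul_nonneg hr1 hl0] : (-r1) * l ≤ 0)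
          (by nlinarith [mul_nonneg hr2 hl1'] : (-r2) * (1 - l) ≤ 0)]
      ring
    have hF1m : AEMeasurable (fun z => (absSqIdeal q z) ^ s * (absSqIdeal a z) ^ (-r1))
        ((volume : Measure (En n)).restrict (Uc ∩ Ua)) := by
      have hQm : AEMeasurable (fun z => absSqIdeal q z)
          ((volume : Measure (En n)).restrict (Uc ∩ Ua)) :=
        (hQc.mono Set.inter_subset_left).aemeasurable hU0o.measurableSet
      have hAm : AEMeasurable (fun z => absSqIdeal a z)
          ((volume : Measure (En n)).restrict (Uc ∩ Ua)) :=
        (hAc.mono Set.inter_subset_right).aemeasurable hU0o.measurableSet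
      exact (((ENNReal.continuous_rpow_const (y := s)).measurable).comp_aemeasurable
        hQm).mul (((ENNReal.continuous_rpow_const (y := -r1)).measurable).comp_aemeasurable hAm)
    refine intNearZero_mono (fun z => ?_) (intNearZero_add hU0o hU00 hF1m hint1 hint2)
    rw [hkey z]
    exact ennreal_rpow_interp_le_add _ _ hl0 hl1
  refine ⟨fun s t hs _ hst => hmono s t hs.le hst, hconc, ?_⟩
  intro s t hs hst
  constructor
  · intro hlts
    by_contra hcon
    rw [not_lt, top_le_iff] at hcon
    exact absurd (hscale s t hs hst hcon) hlts.ne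
  · intro hltt
    exact lt_of_le_of_lt (hmono s t hs.le hst.le) hltt
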